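/- For integers n ≥ 1 and d ≥ 1, the number of monomials of degree 2d in n variables that can be written as a product of two squarefree monomials of degree d equals Σ_{i=0}^{d} C(n, 2i)·C(n - 2i, d - i). -/

import Mathlib

open Finset

/-- Pairs (S, T): S the "degree 1" set of size 2i, T the "degree 2" set of size d - i,
    disjoint from S. -/
def stmt19Ai (n d i : ℕ) : Finset (Finset (Fin n) × Finset (Fin n)) :=
  (Finset.powersetCard (2*i) Finset.univ).biUnion
    (fun S => (Finset.powersetCard (d - i) Sᶜ).image (fun T => (S, T)))

lemma stmt19_mem_Ai {n d i : ℕ} {p : Finset (Fin n) × Finset (Fin n)} :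
    p ∈ stmt19Ai n d i ↔ p.1.card = 2*i ∧ p.2 ⊆ p.1ᶜ ∧ p.2.card = d - i := by
  obtain ⟨S, T⟩ := p
  simp only [stmt19Ai, Finset.mem_biUnion, Finset.mem_image, Finset.mem_powersetCard,
    Prod.mk.injEq]
  constructor
  · rintro ⟨S', ⟨-, hc⟩, T', ⟨hsub, hcT⟩, rfl, rfl⟩
    exact ⟨hc, hsub, hcT⟩
  · rintro ⟨hc, hsub, hcT⟩
    exact ⟨S, ⟨Finset.subset_univ _, hc⟩, T, ⟨hsub, hcT⟩, rfl, rfl⟩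

lemma stmt19_card_Ai (n d i : ℕ) :
    (stmt19Ai n d i).card = Nat.choose n (2*i) * Nat.choose (n - 2*i) (d - i) := by
  rw [stmt19Ai, Finset.card_biUnion]
  · have h : ∀ S ∈ Finset.powersetCard (2*i) (Finset.univ : Finset (Fin n)),
        ((Finset.powersetCard (d - i) Sᶜ).image (fun T => (S, T))).card
          = Nat.choose (n - 2*i) (d - i) := by
      intro S hS
      rw [Finset.mem_powersetCard] at hS
      rw [Finset.card_image_of_injective _ (fun a b h => by
        simpa using (Prod.mk.injEq S a S b).mp h),
        Finset.card_powersetCard, Finset.card_compl, hS.2, Fintype.card_fin]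
    rw [Finset.sum_congr rfl h, Finset.sum_const, Finset.card_powersetCard,
      Finset.card_univ, Fintype.card_fin, smul_eq_mul]
  · intro S hS S' hS' hne
    rw [Function.onFun, Finset.disjoint_left]
    rintro ⟨a, b⟩ ha hb
    simp only [Finset.mem_image, Prod.mk.injEq] at ha hb
    obtain ⟨T, -, rfl, rfl⟩ := ha
    obtain ⟨T', -, h1, -⟩ := hb
    exact hne h1.symm

theorem stmt_19 (n d : ℕ) (hn : 1 ≤ n) (hd : 1 ≤ d) :
    Finset.card
      (Finset.image
        (fun p : Finset (Fin n) × Finset (Fin n) =>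
          (fun i : Fin n => (if i ∈ p.1 then 1 else 0) + (if i ∈ p.2 then 1 else 0)))
        ((Finset.univ : Finset (Finset (Fin n) × Finset (Fin n))).filter
          (fun p => p.1.card = d ∧ p.2.card = d)))
      = ∑ i ∈ Finset.range (d + 1),
          Nat.choose n (2 * i) * Nat.choose (n - 2 * i) (d - i) := by
  have key : Finset.card
      (Finset.image
        (fun p : Finset (Fin n) × Finset (Fin n) =>
          (fun i : Fin n => (if i ∈ p.1 then 1 else 0) + (if i ∈ p.2 then 1 else 0)))
        ((Finset.univ : Finset (Finset (Fin n) × Finset (Fin n))).filter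
          (fun p => p.1.card = d ∧ p.2.card = d)))
      = ((Finset.range (d+1)).biUnion (stmt19Ai n d)).card := by
    refine Finset.card_bij'
      (fun g _ => (Finset.univ.filter (fun x => g x = 1),
                   Finset.univ.filter (fun x => g x = 2)))
      (fun p _ => (fun x : Fin n => if x ∈ p.1 then 1 else if x ∈ p.2 then 2 else 0))
      ?hi ?hj ?left ?right
    case hi => -- maps into target
      intro g hg
      simp only [Finset.mem_image, Finset.mem_filter, Finset.mem_univ, true_and] at hg
      obtain ⟨⟨A, B⟩, ⟨hA, hB⟩, rfl⟩ := hg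
      have h1 : Finset.univ.filter (fun x : Fin n =>
          ((if x ∈ A then 1 else 0) + (if x ∈ B then 1 else 0) : ℕ) = 1)
          = (A \ B) ∪ (B \ A) := by
        ext x
        simp only [Finset.mem_filter, Finset.mem_univ, true_and, Finset.mem_union,
          Finset.mem_sdiff]
        by_cases hxA : x ∈ A <;> by_cases hxB : x ∈ B <;> simp [hxA, hxB]
      have h2 : Finset.univ.filter (fun x : Fin n =>
          ((if x ∈ A then 1 else 0) + (if x ∈ B then 1 else 0) : ℕ) = 2)
          = A ∩ B := by
        ext x
        simp only [Finset.mem_filter, Finset.mem_univ, true_and, Finset.mem_inter]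
        by_cases hxA : x ∈ A <;> by_cases hxB : x ∈ B <;> simp [hxA, hxB]
      have hj : (A ∩ B).card ≤ d := hA ▸ Finset.card_le_card Finset.inter_subset_left
      have hAB : (A \ B).card = d - (A ∩ B).card := by
        rw [← Finset.sdiff_inter_self_left A B, Finset.card_sdiff_of_subset Finset.inter_subset_left, hA]
      have hBA : (B \ A).card = d - (A ∩ B).card := by
        rw [← Finset.sdiff_inter_self_left B A, Finset.card_sdiff_of_subset Finset.inter_subset_left, hB,
          Finset.inter_comm]
      rw [Finset.mem_biUnion]
      refine ⟨d - (A ∩ B).card, by simp [Nat.sub_le, Nat.lt_succ_iff], ?_⟩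
      rw [stmt19_mem_Ai]
      refine ⟨?_, ?_, ?_⟩
      · simp only [h1]
        rw [Finset.card_union_of_disjoint (disjoint_sdiff_sdiff), hAB, hBA]
        omega
      · simp only [h1, h2]
        intro x hx
        simp only [Finset.mem_inter] at hx
        simp [hx.1, hx.2]
      · simp only [h2]; omega
    case hj => -- reverse maps into source
      intro p hp
      rw [Finset.mem_biUnion] at hp
      obtain ⟨i, hi, hpi⟩ := hp
      rw [Finset.mem_range, Nat.lt_succ_iff] at hi
      rw [stmt19_mem_Ai] at hpi
      obtain ⟨hS, hsub, hT⟩ := hpi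
      obtain ⟨S, T⟩ := p
      simp only at hS hsub hT
      have hdisj : Disjoint T S := by
        rw [Finset.disjoint_left]; intro x hx
        have := hsub hx; simp only [Finset.mem_compl] at this; exact this
      obtain ⟨S₁, hS₁sub, hS₁card⟩ := Finset.exists_subset_card_eq
        (show i ≤ S.card by omega)
      simp only [Finset.mem_image, Finset.mem_filter, Finset.mem_univ, true_and]
      refine ⟨(T ∪ S₁, T ∪ (S \ S₁)), ⟨?_, ?_⟩, ?_⟩
      · rw [Finset.card_union_of_disjoint
          (hdisj.mono_right hS₁sub), hT, hS₁card]; omega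
      · rw [Finset.card_union_of_disjoint
          (hdisj.mono_right Finset.sdiff_subset), hT,
          Finset.card_sdiff_of_subset hS₁sub, hS, hS₁card]; omega
      · funext x
        simp only [Finset.mem_union, Finset.mem_sdiff]
        by_cases hxT : x ∈ T
        · have hxS : x ∉ S := fun h => (Finset.disjoint_left.mp hdisj hxT) h
          simp [hxT, hxS]
        · by_cases hxS : x ∈ S
          · by_cases hx1 : x ∈ S₁ <;> simp [hxT, hxS, hx1]
          · have hx1 : x ∉ S₁ := fun h => hxS (hS₁sub h)
            simp [hxT, hxS, hx1]
    case left => -- left inverse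
      intro g hg
      simp only [Finset.mem_image, Finset.mem_filter, Finset.mem_univ, true_and] at hg
      obtain ⟨⟨A, B⟩, ⟨hA, hB⟩, rfl⟩ := hg
      funext x
      simp only [Finset.mem_filter, Finset.mem_univ, true_and]
      by_cases hxA : x ∈ A <;> by_cases hxB : x ∈ B <;> simp [hxA, hxB]
    case right => -- right inverse
      intro p hp
      rw [Finset.mem_biUnion] at hp
      obtain ⟨i, -, hpi⟩ := hp
      rw [stmt19_mem_Ai] at hpi
      obtain ⟨-, hsub, -⟩ := hpi
      obtain ⟨S, T⟩ := p
      simp only at hsub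
      have hdisj : ∀ x ∈ T, x ∉ S := by
        intro x hx; have := hsub hx; simpa using this
      refine Prod.ext ?_ ?_
      · ext x
        simp only [Finset.mem_filter, Finset.mem_univ, true_and]
        by_cases hxS : x ∈ S
        · simp [hxS]
        · by_cases hxT : x ∈ T <;> simp [hxS, hxT]
      · ext x
        simp only [Finset.mem_filter, Finset.mem_univ, true_and]
        by_cases hxS : x ∈ S
        · simp only [hxS, if_true]
          constructor
          · intro h; omega
          · intro h; exact absurd hxS (hdisj x h)
        · by_cases hxT : x ∈ T <;> simp [hxS, hxT]
  rw [key, Finset.card_biUnion, Finset.sum_congr rfl (fun i _ => stmt19_card_Ai n d i)]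
  intro i hi j hj hne
  rw [Function.onFun, Finset.disjoint_left]
  intro p hp hp'
  rw [stmt19_mem_Ai] at hp hp'
  exact hne (by omega)
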